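/- arXiv:0907.2572 — 3 statements merged into one kernel-verified Lean document; each statement's English description precedes it below -/
import Mathlib

section
/- Let θ, ρ > 0 and let μ be the probability measure on ℕ obtained by drawing T from Exp(1) and then drawing N from the Poisson distribution with mean (θ/ρ)·(1−e^{−ρT}). Then the variance of μ equals θ²/((1+ρ)²(1+2ρ)) + θ/(1+ρ). (Second claim of Proposition 5.6: the variance of the number of genes |𝒢_i∖𝒢_j| present in individual i but absent in individual j, where T ~ Exp(1) is the coalescence time of i and j.) -/
open MeasureTheory ProbabilityTheory
open scoped ENNReal NNReal

section Aux
open Real Set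

/-- `∫_0^∞ e^{-bx} dx = 1/b`. -/
lemma aux_integral_exp_neg_mul {b : ℝ} (hb : 0 < b) :
    ∫ x in Ioi (0:ℝ), Real.exp (-(b*x)) = 1/b := by
  have hd : ∀ x ∈ Ici (0:ℝ), HasDerivAt (fun a => -Real.exp (-(b*a)) / b) (Real.exp (-(b*x))) x := by
    intro x _
    have := (hasDerivAt_neg_exp_mul_exp (r := b) (x := x)).div_const b
    simpa [mul_div_assoc, mul_div_cancel_left₀ _ hb.ne'] using this
  have hint : IntegrableOn (fun x => Real.exp (-(b*x))) (Ioi (0:ℝ)) := by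
    simpa [neg_mul] using exp_neg_integrableOn_Ioi 0 hb
  have ht : Filter.Tendsto (fun a => -Real.exp (-(b*a)) / b) Filter.atTop (nhds 0) := by
    have h1 : Filter.Tendsto (fun a : ℝ => -(b*a)) Filter.atTop Filter.atBot := by
      exact Filter.tendsto_neg_atTop_atBot.comp (Filter.Tendsto.const_mul_atTop hb Filter.tendsto_id)
    have h2 := (Real.tendsto_exp_atBot).comp h1
    have := (h2.neg).div_const b
    simpa using this
  have := integral_Ioi_of_hasDerivAt_of_tendsto' hd hint ht
  rw [this]; field_simp; simp

lemma aux_exp_integrableOn {b : ℝ} (hb : 0 < b) :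
    IntegrableOn (fun x : ℝ => Real.exp (-(b*x))) (Ioi (0:ℝ)) := by
  simpa [neg_mul] using exp_neg_integrableOn_Ioi 0 hb

lemma aux_hasSum_poisson_mean (r : ℝ≥0) :
    HasSum (fun n : ℕ => (n : ℝ) * poissonPMFReal r n) r := by
  have h := (poissonPMFRealSum r).mul_left (r : ℝ)
  have key : ∀ n : ℕ, ((n+1 : ℕ) : ℝ) * poissonPMFReal r (n+1) = r * poissonPMFReal r n := by
    intro n
    unfold poissonPMFReal
    rw [Nat.factorial_succ]
    push_cast
    have h1 : (n.factorial : ℝ) ≠ 0 := Nat.cast_ne_zero.mpr n.factorial_ne_zero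
    have h2 : ((n:ℝ) + 1) ≠ 0 := by positivity
    field_simp
    ring
  have h2 : HasSum (fun n : ℕ => ((n+1 : ℕ) : ℝ) * poissonPMFReal r (n+1)) r := by
    simp only [key]
    simpa [poissonPMFReal] using h
  have := (hasSum_nat_add_iff (f := fun n : ℕ => (n : ℝ) * poissonPMFReal r n) 1).mp h2
  simpa using this

lemma aux_hasSum_poisson_sq (r : ℝ≥0) :
    HasSum (fun n : ℕ => (n : ℝ)^2 * poissonPMFReal r n) (r + r^2) := by
  have hm := aux_hasSum_poisson_mean r
  have hp := poissonPMFRealSum r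
  have key : ∀ n : ℕ, ((n+1 : ℕ) : ℝ)^2 * poissonPMFReal r (n+1)
      = r * ((n : ℝ) * poissonPMFReal r n) + r * poissonPMFReal r n := by
    intro n
    unfold poissonPMFReal
    rw [Nat.factorial_succ]
    push_cast
    have h1 : (n.factorial : ℝ) ≠ 0 := Nat.cast_ne_zero.mpr n.factorial_ne_zero
    have h2 : ((n:ℝ) + 1) ≠ 0 := by positivity
    field_simp
    ring
  have h2 : HasSum (fun n : ℕ => ((n+1 : ℕ) : ℝ)^2 * poissonPMFReal r (n+1)) (r^2 + r) := by
    have h3 := (hm.mul_left (r:ℝ)).add (hp.mul_left (r:ℝ))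
    simp only [key]
    simpa [sq, poissonPMFReal] using h3
  have := (hasSum_nat_add_iff (f := fun n : ℕ => (n : ℝ)^2 * poissonPMFReal r n) 1).mp h2
  simpa [add_comm] using this

lemma aux_lintegral_poisson_id (r : ℝ≥0) :
    ∫⁻ n : ℕ, (n : ℝ≥0∞) ∂(poissonMeasure r) = ENNReal.ofReal r := by
  rw [lintegral_countable']
  have hsing : ∀ n : ℕ, poissonMeasure r {n} = ENNReal.ofReal (poissonPMFReal r n) := by
    intro n
    rw [poissonMeasure_singleton]
    rfl
  calc ∑' n : ℕ, (n : ℝ≥0∞) * poissonMeasure r {n}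
      = ∑' n : ℕ, ENNReal.ofReal ((n : ℝ) * poissonPMFReal r n) := by
        congr 1; ext n
        rw [hsing n, ENNReal.ofReal_mul (by positivity), ENNReal.ofReal_natCast]
    _ = ENNReal.ofReal r := by
        rw [← ENNReal.ofReal_tsum_of_nonneg (fun n => mul_nonneg (Nat.cast_nonneg n) poissonPMFReal_nonneg)
          (aux_hasSum_poisson_mean r).summable, (aux_hasSum_poisson_mean r).tsum_eq]

lemma aux_lintegral_poisson_sq (r : ℝ≥0) :
    ∫⁻ n : ℕ, (n : ℝ≥0∞)^2 ∂(poissonMeasure r) = ENNReal.ofReal ((r:ℝ) + (r:ℝ)^2) := by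
  rw [lintegral_countable']
  have hsing : ∀ n : ℕ, poissonMeasure r {n} = ENNReal.ofReal (poissonPMFReal r n) := by
    intro n
    rw [poissonMeasure_singleton]
    rfl
  calc ∑' n : ℕ, (n : ℝ≥0∞)^2 * poissonMeasure r {n}
      = ∑' n : ℕ, ENNReal.ofReal ((n : ℝ)^2 * poissonPMFReal r n) := by
        congr 1; ext n
        rw [hsing n, ENNReal.ofReal_mul (by positivity), ENNReal.ofReal_pow (by positivity),
          ENNReal.ofReal_natCast]
    _ = ENNReal.ofReal ((r:ℝ) + (r:ℝ)^2) := by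
        rw [← ENNReal.ofReal_tsum_of_nonneg (fun n => mul_nonneg (by positivity) poissonPMFReal_nonneg)
          (aux_hasSum_poisson_sq r).summable, (aux_hasSum_poisson_sq r).tsum_eq]

lemma aux_measurable_poisson_comp {L : ℝ → ℝ≥0} (hL : Measurable L) :
    Measurable fun t => poissonMeasure (L t) := by
  apply Measure.measurable_of_measurable_coe
  intro s hs
  have hrw : ∀ t, poissonMeasure (L t) s
      = ∑' n : ℕ, s.indicator (fun n => ENNReal.ofReal (poissonPMFReal (L t) n)) n := by
    intro t
    rw [poissonMeasure, Measure.sum_apply _ hs]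
    congr 1; ext n
    rw [Measure.smul_apply, smul_eq_mul, Measure.dirac_apply' _ hs]
    by_cases h : n ∈ s <;> simp [h, poissonPMFReal]
  simp only [hrw]
  apply Measurable.ennreal_tsum
  intro n
  by_cases hn : n ∈ s
  · simp only [Set.indicator_of_mem hn]
    apply ENNReal.measurable_ofReal.comp
    have hco : Measurable fun t => ((L t : ℝ)) := measurable_coe_nnreal_real.comp hL
    have hcont : Continuous fun x : ℝ => Real.exp (-x) * x ^ n / (n.factorial : ℝ) := by
      fun_prop
    exact hcont.measurable.comp hco
  · simp only [Set.indicator_of_notMem hn]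
    exact measurable_const

lemma aux_lintegral_expMeasure {ψ : ℝ → ℝ} (hψm : Measurable ψ)
    (hint : IntegrableOn (fun t => Real.exp (-t) * ψ t) (Ioi (0:ℝ)))
    (hnn : ∀ t ∈ Ioi (0:ℝ), 0 ≤ ψ t) :
    ∫⁻ t, ENNReal.ofReal (ψ t) ∂(expMeasure 1)
      = ENNReal.ofReal (∫ t in Ioi (0:ℝ), Real.exp (-t) * ψ t) := by
  have hpdfm : Measurable (gammaPDF 1 1) :=
    ENNReal.measurable_ofReal.comp (measurable_gammaPDFReal 1 1)
  rw [expMeasure, gammaMeasure, lintegral_withDensity_eq_lintegral_mul _ hpdfm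
    hψm.ennreal_ofReal]
  have hsplit := (lintegral_add_compl (μ := volume)
    (fun t => (gammaPDF 1 1 * fun t => ENNReal.ofReal (ψ t)) t) (measurableSet_Iio (a := (0:ℝ)))).symm
  rw [hsplit]
  have hzero : ∫⁻ t in Iio (0:ℝ), (gammaPDF 1 1 * fun t => ENNReal.ofReal (ψ t)) t = 0 := by
    rw [setLIntegral_congr_fun_ae (measurableSet_Iio) (ae_of_all _ (fun t (ht : t < 0) => by
      show gammaPDF 1 1 t * ENNReal.ofReal (ψ t) = 0
      rw [gammaPDF_of_neg ht, zero_mul])), lintegral_zero]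
  rw [hzero, zero_add]
  have hIci : (Iio (0:ℝ))ᶜ = Ici (0:ℝ) := compl_Iio
  rw [hIci, ← setLIntegral_congr (Ioi_ae_eq_Ici (a := (0:ℝ)))]
  rw [setLIntegral_congr_fun_ae (measurableSet_Ioi) (ae_of_all _ (fun t (ht : 0 < t) => by
      show gammaPDF 1 1 t * ENNReal.ofReal (ψ t) = ENNReal.ofReal (Real.exp (-t) * ψ t)
      rw [gammaPDF_of_nonneg ht.le, ← ENNReal.ofReal_mul (by positivity)]
      norm_num))]
  rw [← ofReal_integral_eq_lintegral_ofReal hint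
    ((ae_restrict_iff' measurableSet_Ioi).mpr (ae_of_all _
      (fun t ht => mul_nonneg (Real.exp_pos _).le (hnn t ht))))]

end Aux

open Real Set in
/-- Second claim of Proposition 5.6: if `T ~ Exp(1)` and, given `T`,
`N ~ Poisson((θ/ρ)(1 - e^{-ρT}))`, then the variance of `N` equals
`θ²/((1+ρ)²(1+2ρ)) + θ/(1+ρ)`.  This is the variance of the number of genes
`|𝒢ᵢ ∖ 𝒢ⱼ|` present in individual `i` but absent in individual `j`. -/
theorem variance_pairwise_difference (θ ρ : ℝ) (hθ : 0 < θ) (hρ : 0 < ρ)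
    (μ : Measure ℕ)
    (hμ : μ = (expMeasure 1).bind (fun t =>
      poissonMeasure ((θ / ρ * (1 - Real.exp (-ρ * t))).toNNReal))) :
    (∫ n : ℕ, (n : ℝ) ^ 2 ∂μ) - (∫ n : ℕ, (n : ℝ) ∂μ) ^ 2 =
      θ ^ 2 / ((1 + ρ) ^ 2 * (1 + 2 * ρ)) + θ / (1 + ρ) := by
  subst hμ
  have hρ1 : (0:ℝ) < 1 + ρ := by linarith
  have hρ2 : (0:ℝ) < 1 + 2*ρ := by linarith
  have hφm : Measurable fun t : ℝ => θ / ρ * (1 - Real.exp (-ρ * t)) := by fun_prop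
  have hLm : Measurable fun t : ℝ => (θ / ρ * (1 - Real.exp (-ρ * t))).toNNReal :=
    measurable_real_toNNReal.comp hφm
  have hker : Measurable fun t : ℝ => poissonMeasure ((θ / ρ * (1 - Real.exp (-ρ * t))).toNNReal) :=
    aux_measurable_poisson_comp hLm
  have hφnn : ∀ t ∈ Ioi (0:ℝ), 0 ≤ θ / ρ * (1 - Real.exp (-ρ * t)) := by
    intro t ht
    have h1 : Real.exp (-ρ * t) ≤ 1 := by
      rw [Real.exp_le_one_iff]
      simp only [mem_Ioi] at ht
      nlinarith
    have h0 : 0 ≤ θ/ρ := by positivity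
    nlinarith
  -- constants
  set A : ℝ := θ/ρ + (θ/ρ)^2 with hA
  set B : ℝ := -(θ/ρ) - 2*(θ/ρ)^2 with hB
  set C : ℝ := (θ/ρ)^2 with hC
  -- pointwise identities
  have hprod1 : ∀ t : ℝ, Real.exp (-t) * Real.exp (-ρ * t) = Real.exp (-((1+ρ)*t)) := by
    intro t; rw [← Real.exp_add]; congr 1; ring
  have hprod2 : ∀ t : ℝ, Real.exp (-t) * Real.exp (-ρ * t) ^ 2 = Real.exp (-((1+2*ρ)*t)) := by
    intro t; rw [sq, ← Real.exp_add, ← Real.exp_add]; congr 1; ring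
  have hfun1 : (fun t : ℝ => Real.exp (-t) * (θ / ρ * (1 - Real.exp (-ρ * t))))
      = fun t : ℝ => (θ/ρ) * Real.exp (-(1*t)) - (θ/ρ) * Real.exp (-((1+ρ)*t)) := by
    funext t
    rw [← hprod1 t, show -((1:ℝ)*t) = -t by ring]
    ring
  have hkey2 : ∀ t : ℝ, Real.exp (-t) * (θ / ρ * (1 - Real.exp (-ρ * t))
        + (θ / ρ * (1 - Real.exp (-ρ * t)))^2)
      = A * Real.exp (-(1*t)) + B * Real.exp (-((1+ρ)*t)) + C * Real.exp (-((1+2*ρ)*t)) := by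
    intro t
    rw [← hprod1 t, ← hprod2 t, show -((1:ℝ)*t) = -t by ring, hA, hB, hC]
    ring
  -- real integral values
  have hI1 : ∫ t in Ioi (0:ℝ), Real.exp (-t) * (θ / ρ * (1 - Real.exp (-ρ * t)))
      = θ/(1+ρ) := by
    rw [hfun1, integral_sub ((aux_exp_integrableOn one_pos).const_mul _)
      ((aux_exp_integrableOn hρ1).const_mul _), integral_const_mul, integral_const_mul,
      aux_integral_exp_neg_mul one_pos, aux_integral_exp_neg_mul hρ1]
    field_simp
    ring
  have hint1 : IntegrableOn (fun t => Real.exp (-t) * (θ / ρ * (1 - Real.exp (-ρ * t))))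
      (Ioi (0:ℝ)) := by
    rw [hfun1]
    exact ((aux_exp_integrableOn one_pos).const_mul _).sub ((aux_exp_integrableOn hρ1).const_mul _)
  -- the ψ₂ function
  set ψ2 : ℝ → ℝ := fun t => (((θ / ρ * (1 - Real.exp (-ρ * t))).toNNReal : ℝ)
      + ((θ / ρ * (1 - Real.exp (-ρ * t))).toNNReal : ℝ)^2) with hψ2
  have hψ2m : Measurable ψ2 := by
    have h1 : Measurable fun t : ℝ => ((θ / ρ * (1 - Real.exp (-ρ * t))).toNNReal : ℝ) :=
      measurable_coe_nnreal_real.comp hLm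
    exact h1.add (h1.pow_const 2)
  have hψ2eq : ∀ t ∈ Ioi (0:ℝ), Real.exp (-t) * ψ2 t
      = A * Real.exp (-(1*t)) + B * Real.exp (-((1+ρ)*t)) + C * Real.exp (-((1+2*ρ)*t)) := by
    intro t ht
    rw [hψ2]
    simp only [Real.coe_toNNReal _ (hφnn t ht)]
    exact hkey2 t
  have hcombint : IntegrableOn (fun t : ℝ => A * Real.exp (-(1*t)) + B * Real.exp (-((1+ρ)*t))
      + C * Real.exp (-((1+2*ρ)*t))) (Ioi (0:ℝ)) :=
    (((aux_exp_integrableOn one_pos).const_mul _).add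
      ((aux_exp_integrableOn hρ1).const_mul _)).add ((aux_exp_integrableOn hρ2).const_mul _)
  have hint2 : IntegrableOn (fun t => Real.exp (-t) * ψ2 t) (Ioi (0:ℝ)) := by
    refine hcombint.congr ?_
    exact (ae_restrict_iff' measurableSet_Ioi).mpr (ae_of_all _ (fun t ht => (hψ2eq t ht).symm))
  have hI2 : ∫ t in Ioi (0:ℝ), Real.exp (-t) * ψ2 t
      = A + B * (1/(1+ρ)) + C * (1/(1+2*ρ)) := by
    have g1 : IntegrableOn (fun x : ℝ => A * Real.exp (-(1*x)) + B * Real.exp (-((1+ρ)*x))) (Ioi (0:ℝ)) := by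
      exact ((aux_exp_integrableOn one_pos).const_mul _).add ((aux_exp_integrableOn hρ1).const_mul _)
    have g2 : IntegrableOn (fun x : ℝ => C * Real.exp (-((1+2*ρ)*x))) (Ioi (0:ℝ)) := by
      exact (aux_exp_integrableOn hρ2).const_mul _
    have g3 : IntegrableOn (fun x : ℝ => A * Real.exp (-(1*x))) (Ioi (0:ℝ)) := by
      exact (aux_exp_integrableOn one_pos).const_mul _
    have g4 : IntegrableOn (fun x : ℝ => B * Real.exp (-((1+ρ)*x))) (Ioi (0:ℝ)) := by
      exact (aux_exp_integrableOn hρ1).const_mul _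
    rw [setIntegral_congr_fun measurableSet_Ioi (fun t ht => hψ2eq t ht),
      integral_add g1 g2, integral_add g3 g4,
      integral_const_mul, integral_const_mul, integral_const_mul,
      aux_integral_exp_neg_mul one_pos, aux_integral_exp_neg_mul hρ1,
      aux_integral_exp_neg_mul hρ2]
    norm_num
  -- first moment
  have hM1 : ∫⁻ n : ℕ, (n : ℝ≥0∞) ∂((expMeasure 1).bind (fun t =>
      poissonMeasure ((θ / ρ * (1 - Real.exp (-ρ * t))).toNNReal)))
      = ENNReal.ofReal (θ/(1+ρ)) := by
    rw [Measure.lintegral_bind hker.aemeasurable measurable_from_top.aemeasurable]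
    simp only [aux_lintegral_poisson_id, ENNReal.ofReal_coe_nnreal]
    have : (fun t : ℝ => ((θ / ρ * (1 - Real.exp (-ρ * t))).toNNReal : ℝ≥0∞))
        = fun t : ℝ => ENNReal.ofReal (θ / ρ * (1 - Real.exp (-ρ * t))) := rfl
    rw [this, aux_lintegral_expMeasure hφm hint1 hφnn, hI1]
  -- second moment
  have hM2 : ∫⁻ n : ℕ, (n : ℝ≥0∞)^2 ∂((expMeasure 1).bind (fun t =>
      poissonMeasure ((θ / ρ * (1 - Real.exp (-ρ * t))).toNNReal)))
      = ENNReal.ofReal (A + B * (1/(1+ρ)) + C * (1/(1+2*ρ))) := by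
    rw [Measure.lintegral_bind hker.aemeasurable measurable_from_top.aemeasurable]
    simp only [aux_lintegral_poisson_sq]
    rw [show (fun t : ℝ => ENNReal.ofReal
        ((((θ / ρ * (1 - Real.exp (-ρ * t))).toNNReal : ℝ≥0) : ℝ)
          + (((θ / ρ * (1 - Real.exp (-ρ * t))).toNNReal : ℝ≥0) : ℝ)^2))
        = fun t : ℝ => ENNReal.ofReal (ψ2 t) from rfl,
      aux_lintegral_expMeasure hψ2m hint2 (fun t _ => by rw [hψ2]; positivity), hI2]
  -- convert Bochner integrals
  have hval2 : A + B * (1/(1+ρ)) + C * (1/(1+2*ρ))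
      = θ/(1+ρ) + 2*θ^2/((1+ρ)*(1+2*ρ)) := by
    rw [hA, hB, hC]
    field_simp
    ring
  have hnn2 : (0:ℝ) ≤ A + B * (1/(1+ρ)) + C * (1/(1+2*ρ)) := by
    rw [hval2]; positivity
  have he1 : ∫ n : ℕ, (n : ℝ) ∂((expMeasure 1).bind (fun t =>
      poissonMeasure ((θ / ρ * (1 - Real.exp (-ρ * t))).toNNReal))) = θ/(1+ρ) := by
    rw [integral_eq_lintegral_of_nonneg_ae (ae_of_all _ (fun n => Nat.cast_nonneg n))
      ((measurable_from_top : Measurable fun n : ℕ => (n:ℝ)).aestronglyMeasurable)]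
    simp only [ENNReal.ofReal_natCast]
    rw [hM1, ENNReal.toReal_ofReal (by positivity)]
  have he2 : ∫ n : ℕ, (n : ℝ)^2 ∂((expMeasure 1).bind (fun t =>
      poissonMeasure ((θ / ρ * (1 - Real.exp (-ρ * t))).toNNReal)))
      = θ/(1+ρ) + 2*θ^2/((1+ρ)*(1+2*ρ)) := by
    rw [integral_eq_lintegral_of_nonneg_ae (ae_of_all _ (fun n => by positivity))
      ((measurable_from_top : Measurable fun n : ℕ => (n:ℝ)^2).aestronglyMeasurable)]
    have : (fun n : ℕ => ENNReal.ofReal ((n:ℝ)^2)) = fun n : ℕ => (n : ℝ≥0∞)^2 := by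
      funext n
      rw [ENNReal.ofReal_pow (Nat.cast_nonneg n), ENNReal.ofReal_natCast]
    rw [this, hM2, ENNReal.toReal_ofReal hnn2, hval2]
  rw [he1, he2]
  field_simp
  ring
end

section
/- Let θ, ρ > 0 and let ν be the probability measure on ℕ × ℕ obtained by drawing T from Exp(1) and then drawing (Y, Z) as a pair of independent random variables, each Poisson distributed with mean (θ/ρ)·(1−e^{−ρT}). Then the covariance of the two coordinates under ν equals θ²/((1+ρ)²(1+2ρ)). (Third claim of Proposition 5.6: COV[|𝒢_i∖𝒢_j|, |𝒢_j∖𝒢_i|] = θ²/((1+ρ)²(1+2ρ)), since given the coalescence time T of individuals i and j the two private gene counts are independent Poisson with the same random mean.) -/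
open MeasureTheory ProbabilityTheory
open scoped ENNReal NNReal

open Real Set


lemma hasSum_poisson_mean (x : ℝ) :
    HasSum (fun n : ℕ => (n : ℝ) * (Real.exp (-x) * x ^ n / (Nat.factorial n))) x := by
  have h1 : HasSum (fun n : ℕ => x ^ n / (Nat.factorial n)) (Real.exp x) := by
    rw [Real.exp_eq_exp_ℝ]; exact NormedSpace.expSeries_div_hasSum_exp x
  set f : ℕ → ℝ := fun n => (n : ℝ) * (Real.exp (-x) * x ^ n / (Nat.factorial n)) with hf
  have h2 : HasSum (fun n : ℕ => f (n + 1)) x := by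
    have := h1.mul_left (Real.exp (-x) * x)
    have hx : Real.exp (-x) * x * Real.exp x = x := by
      rw [Real.exp_neg]; field_simp
    rw [hx] at this
    convert this using 2 with n
    · rfl
    simp only [hf, Nat.factorial_succ]
    push_cast
    have hn : ((n:ℝ)+1) ≠ 0 := by positivity
    field_simp
    ring
  have h4 := (hasSum_nat_add_iff (f := f) 1).mp h2
  simpa [hf] using h4

lemma lintegral_natCast_poissonMeasure (r : ℝ≥0) :
    ∫⁻ n, (n : ℝ≥0∞) ∂poissonMeasure r = r := by
  rw [lintegral_countable']
  have h : ∀ n : ℕ, poissonMeasure r {n} = ENNReal.ofReal (poissonPMFReal r n) := by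
    intro n
    rw [poissonMeasure_singleton]
    rfl
  have hs : HasSum (fun n : ℕ => (n : ℝ) * poissonPMFReal r n) r := by
    simpa [poissonPMFReal] using hasSum_poisson_mean (r : ℝ)
  calc ∑' n : ℕ, (n : ℝ≥0∞) * poissonMeasure r {n}
      = ∑' n : ℕ, ENNReal.ofReal ((n : ℝ) * poissonPMFReal r n) := by
        congr 1; ext n
        rw [h n, ENNReal.ofReal_mul (by positivity), ENNReal.ofReal_natCast]
    _ = ENNReal.ofReal r := by
        rw [← ENNReal.ofReal_tsum_of_nonneg (fun n => by
              have := poissonPMFReal_nonneg (r := r) (n := n); positivity)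
            hs.summable]
        congr 1
        exact hs.tsum_eq
    _ = r := ENNReal.ofReal_coe_nnreal

lemma measurable_poissonMeasure : Measurable (fun r : ℝ≥0 => poissonMeasure r) := by
  apply Measure.measurable_of_measurable_coe
  intro s hs
  simp only [poissonMeasure, Measure.sum_apply _ hs, Measure.smul_apply, Measure.dirac_apply' _ hs, smul_eq_mul]
  apply Measurable.ennreal_tsum
  intro n
  by_cases hn : n ∈ s
  · simp only [Set.indicator_of_mem hn, Pi.one_apply, mul_one]
    have : Measurable (fun r : ℝ≥0 => ENNReal.ofReal (poissonPMFReal r n)) := by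
      apply ENNReal.measurable_ofReal.comp
      unfold poissonPMFReal
      fun_prop
    exact this
  · simp only [Set.indicator_of_notMem hn, mul_zero]
    exact measurable_const

lemma measurable_poisson_prod {g : ℝ → ℝ≥0} (hg : Measurable g) :
    Measurable (fun t : ℝ => (poissonMeasure (g t)).prod (poissonMeasure (g t))) := by
  let κ : Kernel ℝ ℕ := ⟨fun t => poissonMeasure (g t), measurable_poissonMeasure.comp hg⟩
  have : IsMarkovKernel κ := ⟨fun t => by
    show IsProbabilityMeasure (poissonMeasure (g t)); infer_instance⟩
  have h := (κ ×ₖ κ).measurable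
  have heq : ⇑(κ ×ₖ κ) = fun t : ℝ => (poissonMeasure (g t)).prod (poissonMeasure (g t)) := by
    ext1 t
    rw [Kernel.prod_apply]
    rfl
  rwa [heq] at h

lemma my_integral_exp_neg_mul_Ioi {c : ℝ} (hc : 0 < c) :
    ∫ t in Ioi (0:ℝ), Real.exp (-(c * t)) = 1 / c := by
  have h := integral_exp_neg_mul_rpow (p := 1) (b := c) zero_lt_one hc
  simp only [Real.rpow_one, neg_mul] at h
  rw [h]
  norm_num [Real.Gamma_add_one, Real.Gamma_one, Real.rpow_neg_one]

lemma my_integrable_exp_neg_mul {c : ℝ} (hc : 0 < c) :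
    IntegrableOn (fun t => Real.exp (-(c * t))) (Ioi (0:ℝ)) := by
  simpa [neg_mul] using exp_neg_integrableOn_Ioi 0 hc

section
variable {θ ρ : ℝ} (hθ : 0 < θ) (hρ : 0 < ρ)

lemma expand1 (t : ℝ) : Real.exp (-t) * (θ / ρ * (1 - Real.exp (-ρ * t)))
    = θ / ρ * (Real.exp (-(1 * t)) - Real.exp (-((1 + ρ) * t))) := by
  rw [show -((1 + ρ) * t) = -t + -(ρ * t) by ring, Real.exp_add]
  simp only [neg_mul, one_mul]
  ring

lemma expand2 (t : ℝ) : Real.exp (-t) * (θ / ρ * (1 - Real.exp (-ρ * t))) ^ 2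
    = (θ / ρ) ^ 2 * (Real.exp (-(1 * t)) - 2 * Real.exp (-((1 + ρ) * t))
        + Real.exp (-((1 + 2 * ρ) * t))) := by
  rw [show -((1 + ρ) * t) = -t + -(ρ * t) by ring, Real.exp_add,
    show -((1 + 2 * ρ) * t) = -t + (-(ρ * t) + -(ρ * t)) by ring, Real.exp_add, Real.exp_add]
  simp only [neg_mul, one_mul]
  ring

include hρ

lemma integrable1 : IntegrableOn
    (fun t => Real.exp (-t) * (θ / ρ * (1 - Real.exp (-ρ * t)))) (Ioi (0:ℝ)) := by
  simp only [expand1]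
  exact (((my_integrable_exp_neg_mul zero_lt_one).sub
    (my_integrable_exp_neg_mul (by linarith : (0:ℝ) < 1 + ρ))).const_mul _)

lemma integrable2 : IntegrableOn
    (fun t => Real.exp (-t) * (θ / ρ * (1 - Real.exp (-ρ * t))) ^ 2) (Ioi (0:ℝ)) := by
  simp only [expand2 (θ := θ)]
  refine Integrable.const_mul ?_ _
  exact ((my_integrable_exp_neg_mul zero_lt_one).sub
    ((my_integrable_exp_neg_mul (by linarith : (0:ℝ) < 1 + ρ)).const_mul 2)).add
    (my_integrable_exp_neg_mul (by linarith : (0:ℝ) < 1 + 2 * ρ))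

lemma integral1 : ∫ t in Ioi (0:ℝ), Real.exp (-t) * (θ / ρ * (1 - Real.exp (-ρ * t)))
    = θ / (1 + ρ) := by
  have h1 : (0:ℝ) < 1 + ρ := by linarith
  simp only [expand1]
  rw [integral_const_mul,
    integral_sub (my_integrable_exp_neg_mul zero_lt_one) (my_integrable_exp_neg_mul h1),
    my_integral_exp_neg_mul_Ioi zero_lt_one, my_integral_exp_neg_mul_Ioi h1]
  field_simp
  ring

lemma integral2 : ∫ t in Ioi (0:ℝ), Real.exp (-t) * (θ / ρ * (1 - Real.exp (-ρ * t))) ^ 2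
    = (θ / ρ) ^ 2 * (1 - 2 / (1 + ρ) + 1 / (1 + 2 * ρ)) := by
  have h1 : (0:ℝ) < 1 + ρ := by linarith
  have h2 : (0:ℝ) < 1 + 2 * ρ := by linarith
  simp only [expand2 (θ := θ)]
  have hsub : IntegrableOn (fun a : ℝ => Real.exp (-(1 * a)) - 2 * Real.exp (-((1 + ρ) * a)))
      (Ioi (0:ℝ)) :=
    (my_integrable_exp_neg_mul zero_lt_one).sub ((my_integrable_exp_neg_mul h1).const_mul 2)
  rw [integral_const_mul,
    integral_add hsub (my_integrable_exp_neg_mul h2),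
    integral_sub (my_integrable_exp_neg_mul zero_lt_one)
      ((my_integrable_exp_neg_mul h1).const_mul 2),
    integral_const_mul,
    my_integral_exp_neg_mul_Ioi zero_lt_one, my_integral_exp_neg_mul_Ioi h1,
    my_integral_exp_neg_mul_Ioi h2]
  field_simp

end

section helpers
-- poisson mean lintegral (from a.lean), measurability (b.lean), exp integrals (d.lean) pasted later

lemma inner_fst (r : ℝ≥0) :
    ∫⁻ q : ℕ × ℕ, ENNReal.ofReal ((q.1 : ℝ)) ∂(poissonMeasure r).prod (poissonMeasure r)
      = (r : ℝ≥0∞) := by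
  have h := lintegral_prod_mul (μ := poissonMeasure r) (ν := poissonMeasure r)
    (f := fun n : ℕ => (n : ℝ≥0∞)) (g := fun _ : ℕ => (1 : ℝ≥0∞))
    (measurable_of_countable _).aemeasurable aemeasurable_const
  simp only [mul_one, lintegral_one, measure_univ] at h
  simpa [ENNReal.ofReal_natCast, lintegral_natCast_poissonMeasure] using h

lemma inner_snd (r : ℝ≥0) :
    ∫⁻ q : ℕ × ℕ, ENNReal.ofReal ((q.2 : ℝ)) ∂(poissonMeasure r).prod (poissonMeasure r)
      = (r : ℝ≥0∞) := by
  have h := lintegral_prod_mul (μ := poissonMeasure r) (ν := poissonMeasure r)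
    (f := fun _ : ℕ => (1 : ℝ≥0∞)) (g := fun n : ℕ => (n : ℝ≥0∞))
    aemeasurable_const (measurable_of_countable _).aemeasurable
  simp only [one_mul, lintegral_one, measure_univ] at h
  simpa [ENNReal.ofReal_natCast, lintegral_natCast_poissonMeasure] using h

lemma inner_mul (r : ℝ≥0) :
    ∫⁻ q : ℕ × ℕ, ENNReal.ofReal ((q.1 : ℝ) * (q.2 : ℝ))
        ∂(poissonMeasure r).prod (poissonMeasure r) = (r : ℝ≥0∞) * r := by
  have h := lintegral_prod_mul (μ := poissonMeasure r) (ν := poissonMeasure r)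
    (f := fun n : ℕ => (n : ℝ≥0∞)) (g := fun n : ℕ => (n : ℝ≥0∞))
    (measurable_of_countable _).aemeasurable (measurable_of_countable _).aemeasurable
  rw [lintegral_natCast_poissonMeasure] at h
  rw [← h]
  congr 1; ext q
  rw [ENNReal.ofReal_mul (by positivity), ENNReal.ofReal_natCast, ENNReal.ofReal_natCast]

lemma lintegral_expMeasure_eq {F : ℝ → ℝ≥0∞} {H : ℝ → ℝ} (hF : Measurable F)
    (hFH : ∀ t ∈ Ioi (0:ℝ), F t = ENNReal.ofReal (H t))
    (hH0 : ∀ t ∈ Ioi (0:ℝ), 0 ≤ H t)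
    (hint : IntegrableOn (fun t => Real.exp (-t) * H t) (Ioi (0:ℝ))) :
    ∫⁻ t, F t ∂expMeasure 1
      = ENNReal.ofReal (∫ t in Ioi (0:ℝ), Real.exp (-t) * H t) := by
  have hpdf : Measurable (gammaPDF 1 1) :=
    ENNReal.measurable_ofReal.comp (measurable_gammaPDFReal 1 1)
  have h1 : ∫⁻ t, F t ∂expMeasure 1 = ∫⁻ t, exponentialPDF 1 t * F t ∂volume := by
    show ∫⁻ t, F t ∂(volume.withDensity (gammaPDF 1 1)) = _
    rw [lintegral_withDensity_eq_lintegral_mul _ hpdf hF]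
    rfl
  rw [h1, ← lintegral_add_compl (fun t => exponentialPDF 1 t * F t) measurableSet_Ioi]
  have hcompl : ∫⁻ t in (Ioi (0:ℝ))ᶜ, exponentialPDF 1 t * F t = 0 := by
    rw [compl_Ioi, setLIntegral_congr (Iio_ae_eq_Iic (a := (0:ℝ))).symm,
      setLIntegral_congr_fun measurableSet_Iio
        (fun t (ht : t < 0) => by rw [exponentialPDF_of_neg ht, zero_mul]),
      lintegral_zero]
  have hIoi : ∫⁻ t in Ioi (0:ℝ), exponentialPDF 1 t * F t
      = ∫⁻ t in Ioi (0:ℝ), ENNReal.ofReal (Real.exp (-t) * H t) := by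
    apply setLIntegral_congr_fun measurableSet_Ioi (fun t ht => ?_)
    rw [exponentialPDF_of_nonneg (le_of_lt ht), hFH t ht,
      ← ENNReal.ofReal_mul (by positivity)]
    norm_num
  rw [hcompl, add_zero, hIoi,
    ← ofReal_integral_eq_lintegral_ofReal hint
      ((ae_restrict_mem measurableSet_Ioi).mono fun t ht =>
        mul_nonneg (Real.exp_pos _).le (hH0 t ht))]

end helpers


/-- Third claim of Proposition 5.6: if `T ~ Exp(1)` and, given `T`, `(Y, Z)` is a pair
of independent Poisson random variables, each with mean `(θ/ρ)(1 - e^{-ρT})`, then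
`COV[Y, Z] = θ²/((1+ρ)²(1+2ρ))`.  This is the covariance of the two private gene
counts `|𝒢ᵢ ∖ 𝒢ⱼ|` and `|𝒢ⱼ ∖ 𝒢ᵢ|`. -/
theorem covariance_private_genes (θ ρ : ℝ) (hθ : 0 < θ) (hρ : 0 < ρ)
    (ν : Measure (ℕ × ℕ))
    (hν : ν = (expMeasure 1).bind (fun t =>
      (poissonMeasure ((θ / ρ * (1 - Real.exp (-ρ * t))).toNNReal)).prod
        (poissonMeasure ((θ / ρ * (1 - Real.exp (-ρ * t))).toNNReal)))) :
    (∫ q : ℕ × ℕ, (q.1 : ℝ) * (q.2 : ℝ) ∂ν) -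
      (∫ q : ℕ × ℕ, (q.1 : ℝ) ∂ν) * (∫ q : ℕ × ℕ, (q.2 : ℝ) ∂ν) =
      θ ^ 2 / ((1 + ρ) ^ 2 * (1 + 2 * ρ)) := by
  subst hν
  set μR : ℝ → ℝ := fun t => θ / ρ * (1 - Real.exp (-ρ * t)) with hμR
  have hμRm : Measurable μR := by
    apply Measurable.const_mul
    exact (measurable_const.sub ((Real.measurable_exp).comp (measurable_id.const_mul (-ρ))))
  set g : ℝ → ℝ≥0 := fun t => (μR t).toNNReal with hgdef
  have hg : Measurable g := hμRm.real_toNNReal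
  have hκ : Measurable (fun t : ℝ => (poissonMeasure (g t)).prod (poissonMeasure (g t))) :=
    measurable_poisson_prod hg
  have hμR0 : ∀ t ∈ Ioi (0:ℝ), 0 ≤ μR t := by
    intro t ht
    have : Real.exp (-ρ * t) ≤ 1 := by
      rw [Real.exp_le_one_iff]
      nlinarith [mem_Ioi.mp ht]
    have hd : 0 ≤ θ / ρ := by positivity
    show 0 ≤ θ / ρ * (1 - Real.exp (-ρ * t))
    exact mul_nonneg hd (by linarith)
  have hcoe : ∀ t, (g t : ℝ≥0∞) = ENNReal.ofReal (μR t) := fun t => rfl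
  -- the three integrals
  have key : ∀ f : ℕ × ℕ → ℝ, (0 ≤ f) → ∀ V : ℝ≥0 → ℝ≥0∞,
      (∀ r, ∫⁻ q : ℕ × ℕ, ENNReal.ofReal (f q) ∂(poissonMeasure r).prod (poissonMeasure r)
        = V r) →
      ∫ q : ℕ × ℕ, f q ∂((expMeasure 1).bind (fun t =>
          (poissonMeasure (g t)).prod (poissonMeasure (g t))))
        = (∫⁻ t, V (g t) ∂expMeasure 1).toReal := by
    intro f hf V hV
    rw [integral_eq_lintegral_of_nonneg_ae (ae_of_all _ hf)
      (measurable_of_countable _).aestronglyMeasurable]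
    rw [Measure.lintegral_bind hκ.aemeasurable (measurable_of_countable _).aemeasurable]
    congr 1
    exact lintegral_congr fun t => hV (g t)
  have hfst : ∫ q : ℕ × ℕ, (q.1 : ℝ)
      ∂((expMeasure 1).bind (fun t =>
        (poissonMeasure (g t)).prod (poissonMeasure (g t)))) = θ / (1 + ρ) := by
    rw [key (fun q => (q.1 : ℝ)) (fun q => by positivity) (fun r => (r : ℝ≥0∞)) inner_fst]
    rw [lintegral_expMeasure_eq (F := fun t => (g t : ℝ≥0∞)) (H := μR)
      ((measurable_coe_nnreal_ennreal).comp hg) (fun t _ => hcoe t) hμR0 (integrable1 hρ),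
      ENNReal.toReal_ofReal (setIntegral_nonneg measurableSet_Ioi
        (fun t ht => mul_nonneg (Real.exp_pos _).le (hμR0 t ht))),
      integral1 hρ]
  have hsnd : ∫ q : ℕ × ℕ, (q.2 : ℝ)
      ∂((expMeasure 1).bind (fun t =>
        (poissonMeasure (g t)).prod (poissonMeasure (g t)))) = θ / (1 + ρ) := by
    rw [key (fun q => (q.2 : ℝ)) (fun q => by positivity) (fun r => (r : ℝ≥0∞)) inner_snd]
    rw [lintegral_expMeasure_eq (F := fun t => (g t : ℝ≥0∞)) (H := μR)
      ((measurable_coe_nnreal_ennreal).comp hg) (fun t _ => hcoe t) hμR0 (integrable1 hρ),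
      ENNReal.toReal_ofReal (setIntegral_nonneg measurableSet_Ioi
        (fun t ht => mul_nonneg (Real.exp_pos _).le (hμR0 t ht))),
      integral1 hρ]
  have hmul : ∫ q : ℕ × ℕ, (q.1 : ℝ) * (q.2 : ℝ)
      ∂((expMeasure 1).bind (fun t =>
        (poissonMeasure (g t)).prod (poissonMeasure (g t))))
      = (θ / ρ) ^ 2 * (1 - 2 / (1 + ρ) + 1 / (1 + 2 * ρ)) := by
    rw [key (fun q => (q.1 : ℝ) * (q.2 : ℝ)) (fun q => by positivity)
      (fun r => (r : ℝ≥0∞) * r) inner_mul]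
    have hFH : ∀ t ∈ Ioi (0:ℝ), (g t : ℝ≥0∞) * (g t) = ENNReal.ofReal (μR t ^ 2) := by
      intro t ht
      rw [hcoe t, ← ENNReal.ofReal_mul (hμR0 t ht), sq]
    have hH0 : ∀ t ∈ Ioi (0:ℝ), 0 ≤ μR t ^ 2 := fun t _ => sq_nonneg _
    rw [lintegral_expMeasure_eq (F := fun t => (g t : ℝ≥0∞) * (g t)) (H := fun t => μR t ^ 2)
      (((measurable_coe_nnreal_ennreal).comp hg).mul
        ((measurable_coe_nnreal_ennreal).comp hg)) hFH hH0 (integrable2 hρ),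
      ENNReal.toReal_ofReal (setIntegral_nonneg measurableSet_Ioi
        (fun t ht => mul_nonneg (Real.exp_pos _).le (sq_nonneg _))),
      integral2 hρ]
  rw [hfst, hsnd, hmul]
  have h1 : (1 + ρ) ≠ 0 := by positivity
  have h2 : (1 + 2 * ρ) ≠ 0 := by positivity
  field_simp
  ring
end

section
/- Let ρ, θ > 0 and let T₂, T₃, T₄ be independent random variables with T₂ ~ Exp(1), T₃ ~ Exp(3), T₄ ~ Exp(6). For nonnegative integers a, b, c write E(a,b,c) for the random variable exp(−(ρ/2)(a·T₂ + b·T₃ + c·T₄)), and define c₁ = E(0,0,2) − E(0,2,3) − E(2,2,3) + E(2,3,4), c₂ = E(0,2,2) − E(0,2,3) − E(2,3,3) + E(2,3,4), c₃ = E(2,2,2) − E(2,2,3) − E(2,3,3) + E(2,3,4), c₄ = E(2,2,2) − 2·E(2,3,3) + E(2,3,4), c₅ = E(0,0,2) − 2·E(2,2,3) + E(2,3,4), c₆ = E(0,2,2) − 2·E(2,3,3) + E(2,3,4). Then (θ²/(18ρ²))·𝔼[ 2c₁c₂ + 2c₁c₃ + 2c₂c₃ + c₂² + 3c₃² + 2c₂c₄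 + 2c₃c₄ + 2c₃c₅ + 2c₃c₆ ] = (θ²ρ/4)·(18 + 117(ρ/2) + 203(ρ/2)² + 105(ρ/2)³) / ( (1+ρ/2)²·(1+2(ρ/2))·(1+4(ρ/2))·(3+4(ρ/2))·(3+5(ρ/2))·(6+5(ρ/2))·(6+7(ρ/2)) ). (Theorem 3: the expected number of incongruent pairs of genes 𝔼[P] in the infinitely many genes model, obtained by averaging 𝔼[D_{ij,kl} | 𝒯]·𝔼[D_{ik,jl} | 𝒯] over the 18 equally likely topologies of the Kingman coalescent of four individuals, where T₂, T₃, T₄ are the times during which the coalescent has 2, 3 and 4 lines.) -/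
open MeasureTheory ProbabilityTheory
open scoped ENNReal NNReal

/-- `E(a,b,c) = exp(-(ρ/2)(a·T₂ + b·T₃ + c·T₄))` as a function of `(T₂, T₃, T₄)`. -/
noncomputable def coalE (ρ : ℝ) (a b c : ℕ) (p : ℝ × ℝ × ℝ) : ℝ :=
  Real.exp (-(ρ / 2) * ((a : ℝ) * p.1 + (b : ℝ) * p.2.1 + (c : ℝ) * p.2.2))

/-- The six possible values of `(ρ/θ)·𝔼[D_{ij,kl} | 𝒯]` over the tree topologies. -/
noncomputable def coalC1 (ρ : ℝ) (p : ℝ × ℝ × ℝ) : ℝ :=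
  coalE ρ 0 0 2 p - coalE ρ 0 2 3 p - coalE ρ 2 2 3 p + coalE ρ 2 3 4 p

noncomputable def coalC2 (ρ : ℝ) (p : ℝ × ℝ × ℝ) : ℝ :=
  coalE ρ 0 2 2 p - coalE ρ 0 2 3 p - coalE ρ 2 3 3 p + coalE ρ 2 3 4 p

noncomputable def coalC3 (ρ : ℝ) (p : ℝ × ℝ × ℝ) : ℝ :=
  coalE ρ 2 2 2 p - coalE ρ 2 2 3 p - coalE ρ 2 3 3 p + coalE ρ 2 3 4 p

noncomputable def coalC4 (ρ : ℝ) (p : ℝ × ℝ × ℝ) : ℝ :=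
  coalE ρ 2 2 2 p - 2 * coalE ρ 2 3 3 p + coalE ρ 2 3 4 p

noncomputable def coalC5 (ρ : ℝ) (p : ℝ × ℝ × ℝ) : ℝ :=
  coalE ρ 0 0 2 p - 2 * coalE ρ 2 2 3 p + coalE ρ 2 3 4 p

noncomputable def coalC6 (ρ : ℝ) (p : ℝ × ℝ × ℝ) : ℝ :=
  coalE ρ 0 2 2 p - 2 * coalE ρ 2 3 3 p + coalE ρ 2 3 4 p

section CoalAux
open Real Set
variable {ρ : ℝ}


lemma expAux.ae_nonneg (r : ℝ) : ∀ᵐ x ∂(expMeasure r), 0 ≤ x := by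
  rw [ae_iff]
  have h : {x : ℝ | ¬ 0 ≤ x} = Set.Iio 0 := by ext x; simp [not_le]
  rw [h, expMeasure, gammaMeasure, withDensity_apply _ measurableSet_Iio]
  exact lintegral_gammaPDF_of_nonpos le_rfl

lemma expAux.integrable {r c : ℝ} (hr : 0 < r) (hc : 0 ≤ c) :
    Integrable (fun x => Real.exp (-(c * x))) (expMeasure r) := by
  haveI := isProbabilityMeasure_expMeasure hr
  refine Integrable.mono' (integrable_const 1)
    ((Real.continuous_exp.comp (by continuity)).aestronglyMeasurable) ?_
  filter_upwards [expAux.ae_nonneg r] with x hx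
  rw [Real.norm_eq_abs, Real.abs_exp]
  exact Real.exp_le_one_iff.mpr (by nlinarith)

lemma expAux.integral {r c : ℝ} (hr : 0 < r) (hc : 0 ≤ c) :
    ∫ x, Real.exp (-(c * x)) ∂(expMeasure r) = r / (r + c) := by
  have hrc : 0 < r + c := by linarith
  have hmeas : Measurable fun x => (gammaPDFReal 1 r x).toNNReal :=
    (measurable_gammaPDFReal 1 r).real_toNNReal
  rw [expMeasure, gammaMeasure]
  rw [show gammaPDF 1 r = fun x => ((gammaPDFReal 1 r x).toNNReal : ℝ≥0∞) from rfl,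
    integral_withDensity_eq_integral_smul hmeas]
  have heq : ∀ x : ℝ, (gammaPDFReal 1 r x).toNNReal • Real.exp (-(c * x)) =
      Set.indicator (Set.Ici (0:ℝ)) (fun x => r * Real.exp (-((r + c) * x))) x := by
    intro x
    rw [NNReal.smul_def, Real.coe_toNNReal']
    unfold gammaPDFReal
    by_cases hx : (0:ℝ) ≤ x
    · rw [if_pos hx, Set.indicator_of_mem (Set.mem_Ici.mpr hx)]
      rw [Real.rpow_one, Real.Gamma_one, div_one, sub_self, Real.rpow_zero, mul_one]
      rw [max_eq_left (by positivity), smul_eq_mul, mul_assoc, ← Real.exp_add]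
      congr 1
      ring
    · rw [if_neg hx, Set.indicator_of_notMem (by simpa using hx)]
      simp
  rw [integral_congr_ae (Filter.Eventually.of_forall heq),
    integral_indicator measurableSet_Ici, integral_Ici_eq_integral_Ioi,
    MeasureTheory.integral_const_mul]
  have h2 := integral_comp_mul_left_Ioi (fun x => Real.exp (-x)) 0 hrc
  simp only [mul_zero, smul_eq_mul] at h2
  rw [h2, integral_exp_neg_Ioi_zero]
  field_simp

lemma coalE_pow (ρ : ℝ) (a b c : ℕ) (p : ℝ × ℝ × ℝ) :
    coalE ρ a b c p = Real.exp (-(ρ/2) * p.1) ^ a * Real.exp (-(ρ/2) * p.2.1) ^ b *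
      Real.exp (-(ρ/2) * p.2.2) ^ c := by
  rw [coalE, ← Real.exp_nat_mul, ← Real.exp_nat_mul, ← Real.exp_nat_mul,
    ← Real.exp_add, ← Real.exp_add]
  exact congrArg Real.exp (by ring)

lemma coalE_factor (ρ : ℝ) (a b c : ℕ) (p : ℝ × ℝ × ℝ) :
    coalE ρ a b c p = Real.exp (-(((a:ℝ) * (ρ/2)) * p.1)) *
      (Real.exp (-(((b:ℝ) * (ρ/2)) * p.2.1)) * Real.exp (-(((c:ℝ) * (ρ/2)) * p.2.2))) := by
  rw [coalE, ← Real.exp_add, ← Real.exp_add]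
  exact congrArg Real.exp (by ring)


lemma integrable_coalE (hρ : 0 < ρ) (a b c : ℕ) :
    Integrable (coalE ρ a b c)
      ((expMeasure 1).prod ((expMeasure 3).prod (expMeasure 6))) := by
  haveI := isProbabilityMeasure_expMeasure (show (0:ℝ) < 1 by norm_num)
  haveI := isProbabilityMeasure_expMeasure (show (0:ℝ) < 3 by norm_num)
  haveI := isProbabilityMeasure_expMeasure (show (0:ℝ) < 6 by norm_num)
  have h2 := expAux.integrable (show (0:ℝ) < 1 by norm_num)
    (show (0:ℝ) ≤ (a:ℝ) * (ρ/2) by positivity)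
  have h3 := expAux.integrable (show (0:ℝ) < 3 by norm_num)
    (show (0:ℝ) ≤ (b:ℝ) * (ρ/2) by positivity)
  have h4 := expAux.integrable (show (0:ℝ) < 6 by norm_num)
    (show (0:ℝ) ≤ (c:ℝ) * (ρ/2) by positivity)
  have heq : coalE ρ a b c = fun p : ℝ × ℝ × ℝ =>
      Real.exp (-(((a:ℝ) * (ρ/2)) * p.1)) *
      (Real.exp (-(((b:ℝ) * (ρ/2)) * p.2.1)) * Real.exp (-(((c:ℝ) * (ρ/2)) * p.2.2))) :=
    funext (coalE_factor ρ a b c)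
  rw [heq]
  exact h2.mul_prod (h3.mul_prod h4)

lemma integral_coalE (hρ : 0 < ρ) (a b c : ℕ) :
    ∫ p : ℝ × ℝ × ℝ, coalE ρ a b c p
        ∂((expMeasure 1).prod ((expMeasure 3).prod (expMeasure 6))) =
      (1 / (1 + (a:ℝ) * (ρ/2))) * (3 / (3 + (b:ℝ) * (ρ/2))) * (6 / (6 + (c:ℝ) * (ρ/2))) := by
  haveI := isProbabilityMeasure_expMeasure (show (0:ℝ) < 1 by norm_num)
  haveI := isProbabilityMeasure_expMeasure (show (0:ℝ) < 3 by norm_num)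
  haveI := isProbabilityMeasure_expMeasure (show (0:ℝ) < 6 by norm_num)
  rw [integral_congr_ae (Filter.Eventually.of_forall (coalE_factor ρ a b c))]
  rw [MeasureTheory.integral_prod_mul (fun x => Real.exp (-(((a:ℝ) * (ρ/2)) * x)))
    (fun q : ℝ × ℝ => Real.exp (-(((b:ℝ) * (ρ/2)) * q.1)) *
      Real.exp (-(((c:ℝ) * (ρ/2)) * q.2)))]
  rw [MeasureTheory.integral_prod_mul (fun x => Real.exp (-(((b:ℝ) * (ρ/2)) * x)))
    (fun x => Real.exp (-(((c:ℝ) * (ρ/2)) * x)))]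
  rw [expAux.integral (show (0:ℝ) < 1 by norm_num) (show (0:ℝ) ≤ (a:ℝ) * (ρ/2) by positivity),
    expAux.integral (show (0:ℝ) < 3 by norm_num) (show (0:ℝ) ≤ (b:ℝ) * (ρ/2) by positivity),
    expAux.integral (show (0:ℝ) < 6 by norm_num) (show (0:ℝ) ≤ (c:ℝ) * (ρ/2) by positivity)]
  ring


noncomputable def coalΦ (ρ : ℝ) (q : ℝ × ℕ × ℕ × ℕ) (p : ℝ × ℝ × ℝ) : ℝ :=
  q.1 * coalE ρ q.2.1 q.2.2.1 q.2.2.2 p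

noncomputable def coalV (ρ : ℝ) (q : ℝ × ℕ × ℕ × ℕ) : ℝ :=
  q.1 * ((1 / (1 + (q.2.1:ℝ) * (ρ/2))) * (3 / (3 + (q.2.2.1:ℝ) * (ρ/2))) *
    (6 / (6 + (q.2.2.2:ℝ) * (ρ/2))))

def coalL : List (ℝ × ℕ × ℕ × ℕ) :=
  [((2:ℝ), 0, 2, 4), ((-2:ℝ), 0, 2, 5), ((1:ℝ), 0, 4, 4), ((-4:ℝ), 0, 4, 5),
   ((3:ℝ), 0, 4, 6), ((4:ℝ), 2, 2, 4), ((-4:ℝ), 2, 2, 5), ((-6:ℝ), 2, 3, 5),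
   ((6:ℝ), 2, 3, 6), ((6:ℝ), 2, 4, 4), ((-12:ℝ), 2, 4, 5), ((6:ℝ), 2, 4, 6),
   ((-10:ℝ), 2, 5, 5), ((22:ℝ), 2, 5, 6), ((-12:ℝ), 2, 5, 7), ((5:ℝ), 4, 4, 4),
   ((-14:ℝ), 4, 4, 5), ((9:ℝ), 4, 4, 6), ((-20:ℝ), 4, 5, 5), ((44:ℝ), 4, 5, 6),
   ((-24:ℝ), 4, 5, 7), ((18:ℝ), 4, 6, 6), ((-36:ℝ), 4, 6, 7), ((18:ℝ), 4, 6, 8)]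


lemma integrable_sumlist (hρ : 0 < ρ) : ∀ M : List (ℝ × ℕ × ℕ × ℕ),
    Integrable (fun p => (M.map (fun q => coalΦ ρ q p)).sum)
      ((expMeasure 1).prod ((expMeasure 3).prod (expMeasure 6)))
  | [] => by simpa using integrable_zero _ _ _
  | q :: M => by
      simpa [coalΦ, Pi.add_def] using (((integrable_coalE hρ q.2.1 q.2.2.1 q.2.2.2).const_mul q.1).add
        (integrable_sumlist hρ M))

lemma integral_sumlist (hρ : 0 < ρ) : ∀ M : List (ℝ × ℕ × ℕ × ℕ),
    ∫ p : ℝ × ℝ × ℝ, (M.map (fun q => coalΦ ρ q p)).sum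
        ∂((expMeasure 1).prod ((expMeasure 3).prod (expMeasure 6))) =
      (M.map (coalV ρ)).sum
  | [] => by simp
  | q :: M => by
      simp only [List.map_cons, List.sum_cons]
      rw [integral_add (by exact
            ((integrable_coalE hρ q.2.1 q.2.2.1 q.2.2.2).const_mul q.1))
          (integrable_sumlist hρ M)]
      rw [integral_sumlist hρ M]
      simp only [coalΦ, coalV]
      rw [MeasureTheory.integral_const_mul, integral_coalE hρ]


end CoalAux

set_option maxHeartbeats 2000000 in
/-- Theorem 3: the expected number of incongruent pairs of genes `𝔼[P]` in the
infinitely many genes model, obtained by averaging `𝔼[D_{ij,kl}|𝒯]·𝔼[D_{ik,jl}|𝒯]`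
over the 18 equally likely topologies of the Kingman coalescent of four individuals,
where `T₂ ~ Exp(1)`, `T₃ ~ Exp(3)`, `T₄ ~ Exp(6)` are the holding times with 2, 3 and
4 lines. -/
theorem expected_incongruent_pairs (θ ρ : ℝ) (hθ : 0 < θ) (hρ : 0 < ρ) :
    θ ^ 2 / (18 * ρ ^ 2) *
      (∫ p : ℝ × ℝ × ℝ,
          (2 * coalC1 ρ p * coalC2 ρ p + 2 * coalC1 ρ p * coalC3 ρ p +
            2 * coalC2 ρ p * coalC3 ρ p + coalC2 ρ p ^ 2 + 3 * coalC3 ρ p ^ 2 +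
            2 * coalC2 ρ p * coalC4 ρ p + 2 * coalC3 ρ p * coalC4 ρ p +
            2 * coalC3 ρ p * coalC5 ρ p + 2 * coalC3 ρ p * coalC6 ρ p)
        ∂((expMeasure 1).prod ((expMeasure 3).prod (expMeasure 6)))) =
    θ ^ 2 * ρ / 4 *
      (18 + 117 * (ρ / 2) + 203 * (ρ / 2) ^ 2 + 105 * (ρ / 2) ^ 3) /
      ((1 + ρ / 2) ^ 2 * (1 + 2 * (ρ / 2)) * (1 + 4 * (ρ / 2)) * (3 + 4 * (ρ / 2)) *
        (3 + 5 * (ρ / 2)) * (6 + 5 * (ρ / 2)) * (6 + 7 * (ρ / 2))) := by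
  have hpt : ∀ p : ℝ × ℝ × ℝ,
      (2 * coalC1 ρ p * coalC2 ρ p + 2 * coalC1 ρ p * coalC3 ρ p +
        2 * coalC2 ρ p * coalC3 ρ p + coalC2 ρ p ^ 2 + 3 * coalC3 ρ p ^ 2 +
        2 * coalC2 ρ p * coalC4 ρ p + 2 * coalC3 ρ p * coalC4 ρ p +
        2 * coalC3 ρ p * coalC5 ρ p + 2 * coalC3 ρ p * coalC6 ρ p) =
      (coalL.map (fun q => coalΦ ρ q p)).sum := by
    intro p
    simp only [coalC1, coalC2, coalC3, coalC4, coalC5, coalC6, coalE_pow, coalΦ, coalL,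
      List.map_cons, List.map_nil, List.sum_cons, List.sum_nil]
    ring
  rw [integral_congr_ae (Filter.Eventually.of_forall hpt), integral_sumlist hρ coalL]
  simp only [coalL, coalV, List.map_cons, List.map_nil, List.sum_cons, List.sum_nil]
  push_cast
  norm_num
  have h0 : (1 : ℝ) + 1 * (ρ / 2) ≠ 0 := by positivity
  have h1 : (1 : ℝ) + 2 * (ρ / 2) ≠ 0 := by positivity
  have h2 : (1 : ℝ) + 4 * (ρ / 2) ≠ 0 := by positivity
  have h3 : (3 : ℝ) + 2 * (ρ / 2) ≠ 0 := by positivity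
  have h4 : (3 : ℝ) + 3 * (ρ / 2) ≠ 0 := by positivity
  have h5 : (3 : ℝ) + 4 * (ρ / 2) ≠ 0 := by positivity
  have h6 : (3 : ℝ) + 5 * (ρ / 2) ≠ 0 := by positivity
  have h7 : (3 : ℝ) + 6 * (ρ / 2) ≠ 0 := by positivity
  have h8 : (6 : ℝ) + 4 * (ρ / 2) ≠ 0 := by positivity
  have h9 : (6 : ℝ) + 5 * (ρ / 2) ≠ 0 := by positivity
  have h10 : (6 : ℝ) + 6 * (ρ / 2) ≠ 0 := by positivity
  have h11 : (6 : ℝ) + 7 * (ρ / 2) ≠ 0 := by positivity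
  have h12 : (6 : ℝ) + 8 * (ρ / 2) ≠ 0 := by positivity
  have hρ' : ρ ≠ 0 := ne_of_gt hρ
  field_simp
  ring
end
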